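/- Let f : ℝⁿ → ℝ be continuously differentiable with gradient g. For points x_k, x_{k+1} with s_k = x_{k+1} - x_k, define μ_k = 2(f(x_k) - f(x_{k+1})) + (g(x_k) + g(x_{k+1}))ᵀ s_k. If g is L-Lipschitz on a convex set containing x_k and x_{k+1}, then |μ_k| ≤ L ‖s_k‖². -/

import Mathlib

open scoped RealInnerProductSpace

/-- If `f` is continuously differentiable with gradient `L`-Lipschitz on a convex set
containing `xk` and `xk1`, then `|μ_k| ≤ L ‖s_k‖²` where `s_k = xk1 - xk` and
`μ_k = 2(f(xk) - f(xk1)) + (g(xk) + g(xk1))ᵀ s_k`. -/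
theorem stmt_2 {n : ℕ} (f : EuclideanSpace ℝ (Fin n) → ℝ) (L : ℝ) (hL : 0 < L)
    (hf : ContDiff ℝ 1 f)
    (xk xk1 : EuclideanSpace ℝ (Fin n))
    (s : Set (EuclideanSpace ℝ (Fin n))) (hconv : Convex ℝ s)
    (hxk : xk ∈ s) (hxk1 : xk1 ∈ s)
    (hlip : LipschitzOnWith (Real.toNNReal L) (gradient f) s) :
    abs (2 * (f xk - f xk1) + ⟪gradient f xk + gradient f xk1, xk1 - xk⟫) ≤
      L * ‖xk1 - xk‖ ^ 2 := by
  -- mean value theorem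
  have hdiff : ∀ x, HasGradientAt f (gradient f x) x := fun x =>
    ((hf.differentiable one_ne_zero) x).hasGradientAt
  have hmvt : ∃ ε ∈ segment ℝ xk xk1, f xk1 - f xk = ⟪gradient f ε, xk1 - xk⟫ := by
    obtain ⟨ε, hε, heq⟩ := domain_mvt
      (f' := fun x => (InnerProductSpace.toDual ℝ _) (gradient f x))
      (fun x _ => ((hasGradientAt_iff_hasFDerivAt.mp (hdiff x)).hasFDerivWithinAt))
      hconv hxk hxk1
    exact ⟨ε, hε, by simpa using heq⟩
  obtain ⟨ε, hεseg, hε⟩ := hmvt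
  have hεs : ε ∈ s := hconv.segment_subset hxk hxk1 hεseg
  obtain ⟨a, b, ha, hb, hab, hεdef⟩ := hεseg
  -- rewrite μ as sum of two inner products
  have key : 2 * (f xk - f xk1) + ⟪gradient f xk + gradient f xk1, xk1 - xk⟫
      = ⟪gradient f xk - gradient f ε, xk1 - xk⟫
        + ⟪gradient f xk1 - gradient f ε, xk1 - xk⟫ := by
    rw [inner_sub_left, inner_sub_left, inner_add_left]
    have : f xk - f xk1 = -⟪gradient f ε, xk1 - xk⟫ := by linarith
    rw [this]; ring
  rw [key]
  have hdist : ∀ x, x ∈ s → ‖gradient f x - gradient f ε‖ ≤ L * ‖x - ε‖ := by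
    intro x hx
    have := hlip.dist_le_mul x hx ε hεs
    rwa [dist_eq_norm, dist_eq_norm, Real.coe_toNNReal _ hL.le] at this
  have ha' : a = 1 - b := by linarith
  subst ha'
  have h1 : ‖xk - ε‖ = b * ‖xk1 - xk‖ := by
    have : xk - ε = b • (xk - xk1) := by
      rw [← hεdef]; module
    rw [this, norm_smul, ← norm_neg (xk - xk1)]
    simp [Real.norm_eq_abs, abs_of_nonneg hb]
  have h2 : ‖xk1 - ε‖ = (1 - b) * ‖xk1 - xk‖ := by
    have : xk1 - ε = (1 - b) • (xk1 - xk) := by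
      rw [← hεdef]; module
    rw [this, norm_smul]
    simp [Real.norm_eq_abs, abs_of_nonneg ha]
  calc |⟪gradient f xk - gradient f ε, xk1 - xk⟫
        + ⟪gradient f xk1 - gradient f ε, xk1 - xk⟫|
      ≤ |⟪gradient f xk - gradient f ε, xk1 - xk⟫|
        + |⟪gradient f xk1 - gradient f ε, xk1 - xk⟫| := abs_add_le _ _
    _ ≤ ‖gradient f xk - gradient f ε‖ * ‖xk1 - xk‖
        + ‖gradient f xk1 - gradient f ε‖ * ‖xk1 - xk‖ := by
        gcongr <;> exact abs_real_inner_le_norm _ _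
    _ ≤ L * ‖xk - ε‖ * ‖xk1 - xk‖ + L * ‖xk1 - ε‖ * ‖xk1 - xk‖ := by
        gcongr
        · exact hdist xk hxk
        · exact hdist xk1 hxk1
    _ = L * ‖xk1 - xk‖ ^ 2 := by
        rw [h1, h2]; ring
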